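/- Let G be a simple graph and let E_s, E_t ⊆ E(G) be edge subsets with |E_s| = |E_t| ≥ 2 such that each of E_s and E_t forms a tree. Then there exists a reconfiguration sequence under the TJ rule from E_s to E_t in which every edge subset forms a tree if and only if all the edges in E_s and E_t are contained in the same connected component of G. -/

import Mathlib

namespace Stmt8

variable {V : Type*}

/-- The set of endpoints of edges in `E'`: the vertex set of the subgraph formed by `E'`. -/
def eSupp (E' : Set (Sym2 V)) : Set V := {v | ∃ e ∈ E', v ∈ e}

/-- The subgraph formed by `E'`, as a graph on the vertex set `eSupp E'`. -/
def formed (E' : Set (Sym2 V)) : SimpleGraph (eSupp E') :=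
  (SimpleGraph.fromEdgeSet E').induce (eSupp E')

/-- `E' ⊆ E(G)` and the subgraph formed by `E'` is a tree (a connected acyclic graph). -/
def FormsTree (G : SimpleGraph V) (E' : Set (Sym2 V)) : Prop :=
  E' ⊆ G.edgeSet ∧ (formed E').IsTree

/-- A single token-jumping (TJ) step on edge subsets of `G`. -/
def TJStepE (G : SimpleGraph V) (E1 E2 : Set (Sym2 V)) : Prop :=
  ∃ em ep, em ∈ E1 ∧ ep ∈ G.edgeSet ∧ ep ∉ E1 ∧ E2 = (E1 \ {em}) ∪ {ep}

/-- There is a reconfiguration sequence under the TJ rule from `Es` to `Et` in which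
every edge subset satisfies the property `P`. -/
def TJReachE (G : SimpleGraph V) (P : Set (Sym2 V) → Prop) (Es Et : Set (Sym2 V)) : Prop :=
  ∃ (l : ℕ) (f : ℕ → Set (Sym2 V)), f 0 = Es ∧ f l = Et ∧
    (∀ k ≤ l, P (f k)) ∧ ∀ k < l, TJStepE G (f k) (f (k + 1))

open SimpleGraph

/-! ### Basic support lemmas -/

lemma mem_eSupp {E' : Set (Sym2 V)} {v : V} : v ∈ eSupp E' ↔ ∃ e ∈ E', v ∈ e := Iff.rfl

lemma mem_eSupp_of_edge {E' : Set (Sym2 V)} {e : Sym2 V} {v : V} (he : e ∈ E') (hv : v ∈ e) :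
    v ∈ eSupp E' := ⟨e, he, hv⟩

lemma eSupp_mono {A B : Set (Sym2 V)} (h : A ⊆ B) : eSupp A ⊆ eSupp B :=
  fun _ ⟨e, he, hv⟩ => ⟨e, h he, hv⟩

lemma eSupp_union {A B : Set (Sym2 V)} : eSupp (A ∪ B) = eSupp A ∪ eSupp B := by
  ext v
  constructor
  · rintro ⟨e, (he | he), hv⟩
    · exact Or.inl ⟨e, he, hv⟩
    · exact Or.inr ⟨e, he, hv⟩
  · rintro (⟨e, he, hv⟩ | ⟨e, he, hv⟩)
    · exact ⟨e, Or.inl he, hv⟩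
    · exact ⟨e, Or.inr he, hv⟩

lemma eSupp_pair {a b : V} : eSupp ({s(a,b)} : Set (Sym2 V)) = {a, b} := by
  ext v
  simp [eSupp, Sym2.mem_iff]

lemma edge_mem_of_adj {S : Set (Sym2 V)} {a b : V} (h : (fromEdgeSet S).Adj a b) :
    s(a, b) ∈ S := ((fromEdgeSet_adj _).mp h).1

/-- Every edge of a walk in `fromEdgeSet S` belongs to `S`. -/
lemma walk_edges_mem {S : Set (Sym2 V)} {u v : V} (w : (fromEdgeSet S).Walk u v) :
    ∀ e ∈ w.edges, e ∈ S := by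
  intro e he
  have := w.edges_subset_edgeSet he
  rw [edgeSet_fromEdgeSet] at this
  exact this.1

/-- Transfer a walk whose edges all lie in `S'` to reachability in `fromEdgeSet S'`. -/
lemma reachable_of_walk_edges {S S' : Set (Sym2 V)} {u v : V}
    (w : (fromEdgeSet S).Walk u v) (h : ∀ e ∈ w.edges, e ∈ S') :
    (fromEdgeSet S').Reachable u v := by
  induction w with
  | nil => exact Reachable.refl _
  | @cons a b c hadj p ih =>
    have he : s(a, b) ∈ S' := h _ (by simp [Walk.edges_cons])
    have hne : a ≠ b := hadj.ne
    refine (Adj.reachable ?_).trans (ih fun e he' => h e (by simp [Walk.edges_cons, he']))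
    exact (fromEdgeSet_adj _).mpr ⟨he, hne⟩

lemma reachable_mono_set {S S' : Set (Sym2 V)} (hss : S ⊆ S') {u v : V}
    (h : (fromEdgeSet S).Reachable u v) : (fromEdgeSet S').Reachable u v := by
  obtain ⟨w⟩ := h
  exact reachable_of_walk_edges w fun e he => hss (walk_edges_mem w e he)

lemma mem_supp_of_reachable_ne {S : Set (Sym2 V)} {c d : V}
    (h : (fromEdgeSet S).Reachable c d) (hne : c ≠ d) : c ∈ eSupp S := by
  obtain ⟨w⟩ := h
  cases w with
  | nil => exact absurd rfl hne
  | @cons _ b _ hadj p =>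
    exact ⟨s(c, b), edge_mem_of_adj hadj, Sym2.mem_mk_left _ _⟩

/-- Replace one edge: if `c,d` (endpoints of `em`) are reachable in `fromEdgeSet S'` and
`S ∖ {em} ⊆ S'`, then reachability in `fromEdgeSet S` transfers to `fromEdgeSet S'`. -/
lemma reach_swap {S S' : Set (Sym2 V)} {em : Sym2 V} {c d : V} (hcd : em = s(c, d))
    (hsub : ∀ e ∈ S, e ≠ em → e ∈ S') (hR : (fromEdgeSet S').Reachable c d) :
    ∀ {u v : V}, (fromEdgeSet S).Reachable u v → (fromEdgeSet S').Reachable u v := by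
  intro u v h
  obtain ⟨w⟩ := h
  induction w with
  | nil => exact Reachable.refl _
  | @cons a b c' hadj p ih =>
    have hmem : s(a, b) ∈ S := edge_mem_of_adj hadj
    have hne : a ≠ b := hadj.ne
    refine Reachable.trans ?_ ih
    by_cases he : s(a, b) = em
    · rw [hcd] at he
      rcases Sym2.eq_iff.mp he with ⟨rfl, rfl⟩ | ⟨rfl, rfl⟩
      · exact hR
      · exact hR.symm
    · exact Adj.reachable ((fromEdgeSet_adj _).mpr ⟨hsub _ hmem he, hne⟩)

/-! ### The ambient characterization of forming a tree -/

/-- Ambient-graph formulation of "E' forms a tree". -/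
def Good (G : SimpleGraph V) (T : Set (Sym2 V)) : Prop :=
  T ⊆ G.edgeSet ∧ T.Nonempty ∧
    (∀ u ∈ eSupp T, ∀ v ∈ eSupp T, (fromEdgeSet T).Reachable u v) ∧
    (eSupp T).ncard = T.ncard + 1

/-- A leaf `x` of `T` with (unique) leaf edge `f`. -/
def IsLeafE (T : Set (Sym2 V)) (x : V) (f : Sym2 V) : Prop :=
  f ∈ T ∧ x ∈ f ∧ ∀ e ∈ T, x ∈ e → e = f

lemma good_nondiag {G : SimpleGraph V} {T : Set (Sym2 V)} (h : T ⊆ G.edgeSet) :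
    ∀ e ∈ T, ¬ e.IsDiag := fun e he => G.not_isDiag_of_mem_edgeSet (h he)

/-- A path avoids a leaf `x` if its endpoints differ from `x`. -/
lemma path_avoids_leaf {T : Set (Sym2 V)} {x : V} {f : Sym2 V}
    (hleaf : ∀ e ∈ T, x ∈ e → e = f) :
    ∀ {u v : V} (p : (fromEdgeSet T).Walk u v), p.IsPath → u ≠ x → v ≠ x → x ∉ p.support := by
  intro u v p
  induction p with
  | nil =>
    intro _ hu _ hmem
    rw [Walk.support_nil, List.mem_singleton] at hmem
    exact hu hmem.symm
  | @cons a b c hadj p ih =>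
    intro hp ha hc hmem
    rw [Walk.support_cons, List.mem_cons] at hmem
    rcases hmem with h | hmem
    · exact ha h.symm
    by_cases hb : b = x
    · subst hb
      -- the edge s(a,b) contains x=b hence equals f
      have hf1 : s(a, b) = f := hleaf _ (edge_mem_of_adj hadj) (Sym2.mem_mk_right _ _)
      -- p : walk from b to c, c ≠ b so p is a cons
      cases p with
      | nil => exact hc rfl
      | @cons _ b' _ hadj2 p' =>
        have hf2 : s(b, b') = f := hleaf _ (edge_mem_of_adj hadj2) (Sym2.mem_mk_left _ _)
        have heq : s(b, b') = s(a, b) := by rw [hf1, hf2]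
        have hb'a : b' = a := by
          rcases Sym2.eq_iff.mp heq with ⟨hba, _⟩ | ⟨_, h⟩
          · exact absurd hba.symm ha
          · exact h
        have hpath := (Walk.cons_isPath_iff hadj _).mp hp
        apply hpath.2
        rw [Walk.support_cons]
        exact List.mem_cons_of_mem _ (hb'a ▸ Walk.start_mem_support p')
    · exact ih ((Walk.cons_isPath_iff hadj p).mp hp).1 hb hc hmem

lemma sym2_repr (e : Sym2 V) : ∃ a b : V, e = s(a, b) := by
  induction e using Sym2.ind with
  | _ a b => exact ⟨a, b, rfl⟩

/-- Key replacement lemma for cycles: if `em = s(c,d)` lies on an edge-nodup walk from `a` to `b`,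
all other walk edges are in `U`, and `a,b` are reachable in `fromEdgeSet U`, then so are `c,d`. -/
lemma cyc {T U : Set (Sym2 V)} {em : Sym2 V} {c d : V} (hcd : em = s(c, d))
    (hsub : ∀ e ∈ T, e ≠ em → e ∈ U) :
    ∀ {a b : V} (w : (fromEdgeSet T).Walk a b), w.edges.Nodup → em ∈ w.edges →
      (fromEdgeSet U).Reachable a b → (fromEdgeSet U).Reachable c d := by
  intro a b w
  induction w with
  | nil => intro _ h; simp at h
  | @cons a x b hadj p ih =>
    intro hnd hmem hab
    rw [Walk.edges_cons] at hmem hnd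
    rw [List.nodup_cons] at hnd
    rcases List.mem_cons.mp hmem with heq | hmem'
    · have hpe : ∀ e ∈ p.edges, e ∈ U := by
        intro e he
        refine hsub e (walk_edges_mem p e he) ?_
        intro h; rw [h, heq] at he; exact hnd.1 he
      have hxb : (fromEdgeSet U).Reachable x b := reachable_of_walk_edges p hpe
      have hax : (fromEdgeSet U).Reachable a x := hab.trans hxb.symm
      have heq2 : s(c, d) = s(a, x) := hcd.symm.trans heq
      rcases Sym2.eq_iff.mp heq2 with ⟨rfl, rfl⟩ | ⟨rfl, rfl⟩
      · exact hax
      · exact hax.symm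
    · have hne : s(a, x) ≠ em := by
        intro h; rw [← h] at hmem'; exact hnd.1 hmem'
      have hU : s(a, x) ∈ U := hsub _ (edge_mem_of_adj hadj) hne
      have hadj' : (fromEdgeSet U).Adj a x := (fromEdgeSet_adj _).mpr ⟨hU, hadj.ne⟩
      exact ih hnd.2 hmem' (hadj'.symm.reachable.trans hab)

/-- Walking in `fromEdgeSet S` and projecting to the two sides of a cut edge `g`. -/
lemma split_reach {S : Set (Sym2 V)} {g : Sym2 V} {c d : V} (hgcd : g = s(c, d)) :
    ∀ {u v : V} (w : (fromEdgeSet S).Walk u v),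
      ((fromEdgeSet (S \ {g})).Reachable v c ∨ (fromEdgeSet (S \ {g})).Reachable v d) →
      ((fromEdgeSet (S \ {g})).Reachable u c ∨ (fromEdgeSet (S \ {g})).Reachable u d) := by
  intro u v w
  induction w with
  | nil => exact id
  | @cons a x _ hadj p ih =>
    intro hv
    by_cases heg : s(a, x) = g
    · rw [hgcd] at heg
      rcases Sym2.eq_iff.mp heg with ⟨rfl, rfl⟩ | ⟨rfl, rfl⟩
      · exact Or.inl (Reachable.refl _)
      · exact Or.inr (Reachable.refl _)
    · have hadj' : (fromEdgeSet (S \ {g})).Adj a x :=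
        (fromEdgeSet_adj _).mpr ⟨⟨edge_mem_of_adj hadj, heg⟩, hadj.ne⟩
      rcases ih hv with h | h
      · exact Or.inl (hadj'.reachable.trans h)
      · exact Or.inr (hadj'.reachable.trans h)

/-- Edges along a walk starting in a "closed class" stay in the class edge set. -/
lemma walk_edges_in_class {S' : Set (Sym2 V)} {A0 : Set V} {SA : Set (Sym2 V)}
    (hstep : ∀ a x : V, (fromEdgeSet S').Adj a x → a ∈ A0 → x ∈ A0 ∧ s(a, x) ∈ SA) :
    ∀ {u v : V} (w : (fromEdgeSet S').Walk u v), u ∈ A0 → ∀ e ∈ w.edges, e ∈ SA := by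
  intro u v w
  induction w with
  | nil => intro _ e he; simp at he
  | @cons a x _ hadj p ih =>
    intro ha e he
    obtain ⟨hxA, hedge⟩ := hstep a x hadj ha
    rw [Walk.edges_cons] at he
    rcases List.mem_cons.mp he with rfl | he'
    · exact hedge
    · exact ih hxA e he'

/-- A connected edge set has at least (number of vertices - 1) edges. -/
lemma conn_count [Fintype V] :
    ∀ (n : ℕ) (S : Set (Sym2 V)), S.ncard ≤ n → (∀ e ∈ S, ¬ e.IsDiag) →
    (∀ u ∈ eSupp S, ∀ v ∈ eSupp S, (fromEdgeSet S).Reachable u v) →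
    (eSupp S).ncard ≤ S.ncard + 1 := by
  intro n
  induction n with
  | zero =>
    intro S hn _ _
    have h0 : S.ncard = 0 := Nat.le_zero.mp hn
    have : S = ∅ := (Set.ncard_eq_zero (Set.toFinite S)).mp h0
    subst this
    have : eSupp (∅ : Set (Sym2 V)) = ∅ := by
      ext v; constructor
      · rintro ⟨e, he, _⟩; exact he
      · rintro h; exact h.elim
    rw [this]
    simp
  | succ n ihn =>
    intro S hn hdiag hreach
    rcases Set.eq_empty_or_nonempty S with rfl | ⟨g, hg⟩
    · have : eSupp (∅ : Set (Sym2 V)) = ∅ := by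
        ext v; constructor
        · rintro ⟨e, he, _⟩; exact he
        · rintro h; exact h.elim
      rw [this]; simp
    obtain ⟨c, d, hgcd⟩ := sym2_repr g
    have hcd : c ≠ d := by
      intro h; apply hdiag g hg; rw [hgcd, h]; exact Sym2.mk_isDiag_iff.mpr rfl
    have hcS : c ∈ eSupp S := ⟨g, hg, by rw [hgcd]; exact Sym2.mem_mk_left _ _⟩
    have hdS : d ∈ eSupp S := ⟨g, hg, by rw [hgcd]; exact Sym2.mem_mk_right _ _⟩
    have hcard_diff : (S \ {g}).ncard = S.ncard - 1 := by
      rw [← Set.ncard_singleton g, Set.ncard_diff (by simpa using hg) (Set.toFinite _)]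
    have hpos : 0 < S.ncard := (Set.ncard_pos (Set.toFinite S)).mpr ⟨g, hg⟩
    by_cases hRcd : (fromEdgeSet (S \ {g})).Reachable c d
    · -- g is redundant
      have hsupp : eSupp (S \ {g}) = eSupp S := by
        apply Set.Subset.antisymm (eSupp_mono Set.diff_subset)
        rintro u ⟨e, he, hu⟩
        by_cases heg : e = g
        · subst heg
          rw [hgcd] at hu
          rcases Sym2.mem_iff.mp hu with rfl | rfl
          · exact mem_supp_of_reachable_ne hRcd hcd
          · exact mem_supp_of_reachable_ne hRcd.symm hcd.symm
        · exact ⟨e, ⟨he, heg⟩, hu⟩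
      have hreach' : ∀ u ∈ eSupp (S \ {g}), ∀ v ∈ eSupp (S \ {g}),
          (fromEdgeSet (S \ {g})).Reachable u v := by
        intro u hu v hv
        rw [hsupp] at hu hv
        exact reach_swap (S' := S \ {g}) hgcd (fun e he hne => ⟨he, hne⟩) hRcd (hreach u hu v hv)
      have hb := ihn (S \ {g}) (by omega) (fun e he => hdiag e he.1) hreach'
      rw [hsupp] at hb
      omega
    · -- g is a cut edge; split into two components
      -- the generic one-side bound
      have key : ∀ (c0 : V), c0 ∈ eSupp S →
          ({u | u ∈ eSupp S ∧ (fromEdgeSet (S \ {g})).Reachable u c0}).ncard ≤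
          ({e | e ∈ S ∧ e ≠ g ∧ ∀ z ∈ e, z ∈ eSupp S ∧
              (fromEdgeSet (S \ {g})).Reachable z c0}).ncard + 1 := by
        intro c0 hc0S
        have hc0 : c0 ∈ {u | u ∈ eSupp S ∧ (fromEdgeSet (S \ {g})).Reachable u c0} :=
          ⟨hc0S, Reachable.refl _⟩
        by_cases htriv : {u | u ∈ eSupp S ∧ (fromEdgeSet (S \ {g})).Reachable u c0} ⊆ {c0}
        · calc ({u | u ∈ eSupp S ∧ (fromEdgeSet (S \ {g})).Reachable u c0}).ncard
              ≤ ({c0} : Set V).ncard := Set.ncard_le_ncard htriv (Set.toFinite _)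
            _ = 1 := Set.ncard_singleton _
            _ ≤ _ := by omega
        · obtain ⟨u0, hu0, hu0c⟩ := Set.not_subset.mp htriv
          rw [Set.mem_singleton_iff] at hu0c
          have hstep : ∀ a x : V, (fromEdgeSet (S \ {g})).Adj a x →
              a ∈ {u | u ∈ eSupp S ∧ (fromEdgeSet (S \ {g})).Reachable u c0} →
              x ∈ {u | u ∈ eSupp S ∧ (fromEdgeSet (S \ {g})).Reachable u c0} ∧
              s(a, x) ∈ {e | e ∈ S ∧ e ≠ g ∧ ∀ z ∈ e, z ∈ eSupp S ∧
                (fromEdgeSet (S \ {g})).Reachable z c0} := by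
            intro a x hadj ha
            have hmemS : s(a, x) ∈ S := (edge_mem_of_adj hadj).1
            have hneg : s(a, x) ≠ g := (edge_mem_of_adj hadj).2
            have hxA : x ∈ {u | u ∈ eSupp S ∧ (fromEdgeSet (S \ {g})).Reachable u c0} :=
              ⟨⟨s(a,x), hmemS, Sym2.mem_mk_right _ _⟩, hadj.symm.reachable.trans ha.2⟩
            refine ⟨hxA, hmemS, hneg, ?_⟩
            intro z hz
            rcases Sym2.mem_iff.mp hz with rfl | rfl
            · exact ha
            · exact hxA
          have hmemsupp : ∀ v ∈ {u | u ∈ eSupp S ∧ (fromEdgeSet (S \ {g})).Reachable u c0},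
              ∀ u' ∈ {u | u ∈ eSupp S ∧ (fromEdgeSet (S \ {g})).Reachable u c0}, v ≠ u' →
              v ∈ eSupp {e | e ∈ S ∧ e ≠ g ∧ ∀ z ∈ e, z ∈ eSupp S ∧
                (fromEdgeSet (S \ {g})).Reachable z c0} := by
            intro v hv u' hu' hvu
            have hr : (fromEdgeSet (S \ {g})).Reachable v u' := hv.2.trans hu'.2.symm
            obtain ⟨w⟩ := hr
            cases w with
            | nil => exact absurd rfl hvu
            | @cons _ y _ hadj p =>
              exact ⟨s(v, y), (hstep v y hadj hv).2, Sym2.mem_mk_left _ _⟩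
          have hsuppA : eSupp {e | e ∈ S ∧ e ≠ g ∧ ∀ z ∈ e, z ∈ eSupp S ∧
                (fromEdgeSet (S \ {g})).Reachable z c0} =
              {u | u ∈ eSupp S ∧ (fromEdgeSet (S \ {g})).Reachable u c0} := by
            apply Set.Subset.antisymm
            · rintro v ⟨e, ⟨_, _, he⟩, hv⟩
              exact he v hv
            · intro v hv
              by_cases hvc : v = c0
              · exact hmemsupp v hv u0 hu0 (by rw [hvc]; exact fun h => hu0c h.symm)
              · exact hmemsupp v hv c0 hc0 hvc
          have hreachA : ∀ u ∈ eSupp {e | e ∈ S ∧ e ≠ g ∧ ∀ z ∈ e, z ∈ eSupp S ∧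
                (fromEdgeSet (S \ {g})).Reachable z c0},
              ∀ v ∈ eSupp {e | e ∈ S ∧ e ≠ g ∧ ∀ z ∈ e, z ∈ eSupp S ∧
                (fromEdgeSet (S \ {g})).Reachable z c0},
              (fromEdgeSet {e | e ∈ S ∧ e ≠ g ∧ ∀ z ∈ e, z ∈ eSupp S ∧
                (fromEdgeSet (S \ {g})).Reachable z c0}).Reachable u v := by
            intro u hu v hv
            rw [hsuppA] at hu hv
            have hr : (fromEdgeSet (S \ {g})).Reachable u v := hu.2.trans hv.2.symm
            obtain ⟨w⟩ := hr
            exact reachable_of_walk_edges w (walk_edges_in_class hstep w hu)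
          have hSAsub : {e | e ∈ S ∧ e ≠ g ∧ ∀ z ∈ e, z ∈ eSupp S ∧
                (fromEdgeSet (S \ {g})).Reachable z c0} ⊆ S \ {g} := by
            rintro e ⟨he, hne, _⟩; exact ⟨he, hne⟩
          have hb := ihn {e | e ∈ S ∧ e ≠ g ∧ ∀ z ∈ e, z ∈ eSupp S ∧
                (fromEdgeSet (S \ {g})).Reachable z c0}
            (by
              have := Set.ncard_le_ncard hSAsub (Set.toFinite _)
              omega)
            (fun e he => hdiag e he.1) hreachA
          rw [hsuppA] at hb
          exact hb
      have hbA := key c hcS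
      have hbB := key d hdS
      have hdisjS : Disjoint
          {e | e ∈ S ∧ e ≠ g ∧ ∀ z ∈ e, z ∈ eSupp S ∧ (fromEdgeSet (S \ {g})).Reachable z c}
          {e | e ∈ S ∧ e ≠ g ∧ ∀ z ∈ e, z ∈ eSupp S ∧ (fromEdgeSet (S \ {g})).Reachable z d} := by
        rw [Set.disjoint_left]
        rintro e ⟨heS, _, heA⟩ ⟨_, _, heB⟩
        obtain ⟨a, b, rfl⟩ := sym2_repr e
        exact hRcd ((heA a (Sym2.mem_mk_left _ _)).2.symm.trans (heB a (Sym2.mem_mk_left _ _)).2)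
      have hsubS :
          {e | e ∈ S ∧ e ≠ g ∧ ∀ z ∈ e, z ∈ eSupp S ∧ (fromEdgeSet (S \ {g})).Reachable z c} ∪
          {e | e ∈ S ∧ e ≠ g ∧ ∀ z ∈ e, z ∈ eSupp S ∧ (fromEdgeSet (S \ {g})).Reachable z d} ⊆
          S \ {g} := by
        rintro e (⟨he, hne, _⟩ | ⟨he, hne, _⟩) <;> exact ⟨he, hne⟩
      have hcovers : eSupp S ⊆
          {u | u ∈ eSupp S ∧ (fromEdgeSet (S \ {g})).Reachable u c} ∪
          {u | u ∈ eSupp S ∧ (fromEdgeSet (S \ {g})).Reachable u d} := by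
        intro u hu
        obtain ⟨w⟩ := hreach u hu c hcS
        rcases split_reach hgcd w (Or.inl (Reachable.refl _)) with h | h
        · exact Or.inl ⟨hu, h⟩
        · exact Or.inr ⟨hu, h⟩
      have h1 := Set.ncard_le_ncard hcovers (Set.toFinite _)
      have h2 := Set.ncard_union_le
          {u | u ∈ eSupp S ∧ (fromEdgeSet (S \ {g})).Reachable u c}
          {u | u ∈ eSupp S ∧ (fromEdgeSet (S \ {g})).Reachable u d}
      have h3 := Set.ncard_union_eq hdisjS (Set.toFinite _) (Set.toFinite _)
      have h4 := Set.ncard_le_ncard hsubS (Set.toFinite _)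
      omega

lemma conn_count' [Fintype V] (S : Set (Sym2 V)) (hd : ∀ e ∈ S, ¬ e.IsDiag)
    (hr : ∀ u ∈ eSupp S, ∀ v ∈ eSupp S, (fromEdgeSet S).Reachable u v) :
    (eSupp S).ncard ≤ S.ncard + 1 :=
  conn_count S.ncard S le_rfl hd hr

/-- In a Good set, removing an edge disconnects its endpoints (no cycles). -/
lemma nocycle {G : SimpleGraph V} [Fintype V] {T : Set (Sym2 V)} (hG : Good G T)
    {g : Sym2 V} {c d : V} (hg : g ∈ T) (hgcd : g = s(c, d))
    (hR : (fromEdgeSet (T \ {g})).Reachable c d) : False := by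
  obtain ⟨hTG, hne, hreach, hcard⟩ := hG
  have hcd : c ≠ d := by
    intro h
    apply good_nondiag hTG g hg
    rw [hgcd, h]; exact Sym2.mk_isDiag_iff.mpr rfl
  have hsupp : eSupp (T \ {g}) = eSupp T := by
    apply Set.Subset.antisymm (eSupp_mono Set.diff_subset)
    rintro u ⟨e, he, hu⟩
    by_cases heg : e = g
    · subst heg
      rw [hgcd] at hu
      rcases Sym2.mem_iff.mp hu with rfl | rfl
      · exact mem_supp_of_reachable_ne hR hcd
      · exact mem_supp_of_reachable_ne hR.symm hcd.symm
    · exact ⟨e, ⟨he, heg⟩, hu⟩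
  have hreach' : ∀ u ∈ eSupp (T \ {g}), ∀ v ∈ eSupp (T \ {g}),
      (fromEdgeSet (T \ {g})).Reachable u v := by
    intro u hu v hv
    rw [hsupp] at hu hv
    exact reach_swap (S' := T \ {g}) hgcd (fun e he hne => ⟨he, hne⟩) hR (hreach u hu v hv)
  have hcount := conn_count' (T \ {g}) (fun e he => good_nondiag hTG e he.1) hreach'
  rw [hsupp, hcard] at hcount
  have h1 : (T \ {g}).ncard = T.ncard - 1 := by
    rw [← Set.ncard_singleton g, Set.ncard_diff (by simpa using hg) (Set.toFinite _)]
  have hpos : 0 < T.ncard := (Set.ncard_pos (Set.toFinite T)).mpr hne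
  omega

open scoped Classical in
lemma handshake [Fintype V] {T : Set (Sym2 V)} (hd : ∀ e ∈ T, ¬ e.IsDiag) :
    ∑ v ∈ (Set.toFinite (eSupp T)).toFinset, {e | e ∈ T ∧ v ∈ e}.ncard = 2 * T.ncard := by
  classical
  have hstep : ∀ v : V, {e | e ∈ T ∧ v ∈ e}.ncard
      = ((Set.toFinite T).toFinset.filter (fun e => v ∈ e)).card := by
    intro v
    rw [← Set.ncard_coe_finset]
    congr 1
    ext e
    simp [Set.Finite.mem_toFinset, Set.mem_setOf_eq]
  calc ∑ v ∈ (Set.toFinite (eSupp T)).toFinset, {e | e ∈ T ∧ v ∈ e}.ncard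
      = ∑ v ∈ (Set.toFinite (eSupp T)).toFinset,
        ∑ e ∈ (Set.toFinite T).toFinset, (if v ∈ e then 1 else 0) := by
        refine Finset.sum_congr rfl fun v _ => ?_
        rw [hstep, Finset.card_filter]
    _ = ∑ e ∈ (Set.toFinite T).toFinset,
        ∑ v ∈ (Set.toFinite (eSupp T)).toFinset, (if v ∈ e then 1 else 0) := Finset.sum_comm
    _ = ∑ _e ∈ (Set.toFinite T).toFinset, 2 := by
        refine Finset.sum_congr rfl fun e he => ?_
        rw [Set.Finite.mem_toFinset] at he
        obtain ⟨a, b, rfl⟩ := sym2_repr e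
        have hab : a ≠ b := fun h => hd _ he (by rw [h]; exact Sym2.mk_isDiag_iff.mpr rfl)
        rw [← Finset.card_filter]
        have hfil : (Set.toFinite (eSupp T)).toFinset.filter (fun v => v ∈ s(a,b)) = {a, b} := by
          ext v
          simp only [Finset.mem_filter, Set.Finite.mem_toFinset, Finset.mem_insert,
            Finset.mem_singleton, Sym2.mem_iff]
          refine ⟨fun h => h.2, fun h => ⟨⟨s(a,b), he, ?_⟩, h⟩⟩
          rcases h with rfl | rfl
          · exact Sym2.mem_mk_left _ _
          · exact Sym2.mem_mk_right _ _
        rw [hfil, Finset.card_insert_of_notMem (by simp [hab]), Finset.card_singleton]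
    _ = 2 * T.ncard := by
        rw [Finset.sum_const, smul_eq_mul, mul_comm,
          ← Set.ncard_eq_toFinset_card _ (Set.toFinite T)]

lemma leaf_of_deg_one {T : Set (Sym2 V)} {x : V} (h : {e | e ∈ T ∧ x ∈ e}.ncard = 1) :
    ∃ f, IsLeafE T x f := by
  obtain ⟨f, hf⟩ := Set.ncard_eq_one.mp h
  have hfmem : f ∈ {e | e ∈ T ∧ x ∈ e} := by rw [hf]; rfl
  refine ⟨f, hfmem.1, hfmem.2, ?_⟩
  intro e he hx
  have : e ∈ {e | e ∈ T ∧ x ∈ e} := ⟨he, hx⟩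
  rw [hf] at this
  exact this

lemma deg_ge_one [Fintype V] {T : Set (Sym2 V)} {v : V} (hv : v ∈ eSupp T) :
    1 ≤ {e | e ∈ T ∧ v ∈ e}.ncard := by
  obtain ⟨e, he, hve⟩ := hv
  exact (Set.ncard_pos (Set.toFinite _)).mpr ⟨e, he, hve⟩

lemma two_leaves [Fintype V] {G : SimpleGraph V} {T : Set (Sym2 V)} (hG : Good G T)
    (h2 : 2 ≤ T.ncard) (a : V) : ∃ x f, IsLeafE T x f ∧ x ≠ a := by
  classical
  obtain ⟨hTG, hne, hreach, hcard⟩ := hG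
  have hd := good_nondiag hTG
  set FV := (Set.toFinite (eSupp T)).toFinset with hFV
  have hFVcard : FV.card = T.ncard + 1 := by
    rw [hFV, ← Set.ncard_eq_toFinset_card _ (Set.toFinite (eSupp T)), hcard]
  set L := FV.filter (fun v => {e | e ∈ T ∧ v ∈ e}.ncard = 1) with hL
  have hsum : ∑ v ∈ FV, {e | e ∈ T ∧ v ∈ e}.ncard = 2 * T.ncard := handshake hd
  have hlow : ∀ v ∈ FV, 2 ≤ {e | e ∈ T ∧ v ∈ e}.ncard + (if v ∈ L then 1 else 0) := by
    intro v hv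
    have hv' : v ∈ eSupp T := (Set.Finite.mem_toFinset _).mp hv
    have h1 := deg_ge_one hv'
    by_cases hvL : v ∈ L
    · simp only [hvL, if_pos]
      omega
    · have : {e | e ∈ T ∧ v ∈ e}.ncard ≠ 1 := by
        intro h; exact hvL (Finset.mem_filter.mpr ⟨hv, h⟩)
      simp only [hvL, if_neg, if_false]
      omega
  have hsum2 : 2 * FV.card ≤ 2 * T.ncard + L.card := by
    calc 2 * FV.card = ∑ _v ∈ FV, 2 := by rw [Finset.sum_const, smul_eq_mul, mul_comm]
      _ ≤ ∑ v ∈ FV, ({e | e ∈ T ∧ v ∈ e}.ncard + (if v ∈ L then 1 else 0)) :=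
          Finset.sum_le_sum hlow
      _ = (∑ v ∈ FV, {e | e ∈ T ∧ v ∈ e}.ncard) + (∑ v ∈ FV, if v ∈ L then 1 else 0) :=
          Finset.sum_add_distrib
      _ = 2 * T.ncard + L.card := by
          rw [hsum, Finset.sum_ite_mem, Finset.inter_eq_right.mpr (Finset.filter_subset _ _),
            Finset.sum_const, smul_eq_mul, mul_one]
  have hL2 : 1 < L.card := by omega
  obtain ⟨x1, hx1, x2, hx2, hx12⟩ := Finset.one_lt_card.mp hL2
  have hdeg : ∀ y ∈ L, ∃ f, IsLeafE T y f := fun y hy =>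
    leaf_of_deg_one (Finset.mem_filter.mp hy).2
  by_cases hxa : x1 = a
  · obtain ⟨f, hf⟩ := hdeg x2 hx2
    exact ⟨x2, f, hf, by rw [← hxa]; exact hx12.symm⟩
  · obtain ⟨f, hf⟩ := hdeg x1 hx1
    exact ⟨x1, f, hf, hxa⟩

/-- A walk from outside `W` to inside `W` crosses an edge. -/
lemma cross {S : Set (Sym2 V)} {W : Set V} :
    ∀ {u v : V} (w : (fromEdgeSet S).Walk u v), u ∉ W → v ∈ W →
      ∃ a b : V, s(a, b) ∈ S ∧ a ∉ W ∧ b ∈ W := by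
  intro u v w
  induction w with
  | nil => intro hu hv; exact absurd hv hu
  | @cons a x _ hadj p ih =>
    intro hu hv
    by_cases hx : x ∈ W
    · exact ⟨a, x, edge_mem_of_adj hadj, hu, hx⟩
    · exact ih hx hv

/-- If `C` is a proper Good subset of the Good set `T`,
then `T` has a leaf edge not belonging to `C`. -/
lemma crown [Fintype V] {G : SimpleGraph V} {T C : Set (Sym2 V)} (hT : Good G T) (hC : Good G C)
    (hsub : C ⊆ T) (hlt : C.ncard < T.ncard) : ∃ x f, IsLeafE T x f ∧ f ∉ C := by
  classical
  by_contra hcon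
  push_neg at hcon
  obtain ⟨hTG, hTne, hTreach, hTcard⟩ := hT
  obtain ⟨hCG, hCne, hCreach, hCcard⟩ := hC
  have hd := good_nondiag hTG
  have hdC := good_nondiag hCG
  set FV := (Set.toFinite (eSupp T)).toFinset with hFV
  set FW := (Set.toFinite (eSupp C)).toFinset with hFW
  have hWV : FW ⊆ FV := by
    intro v hv
    rw [hFW, Set.Finite.mem_toFinset] at hv
    rw [hFV, Set.Finite.mem_toFinset]
    exact eSupp_mono hsub hv
  have hFVcard : FV.card = T.ncard + 1 := by
    rw [hFV, ← Set.ncard_eq_toFinset_card _ (Set.toFinite (eSupp T)), hTcard]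
  have hFWcard : FW.card = C.ncard + 1 := by
    rw [hFW, ← Set.ncard_eq_toFinset_card _ (Set.toFinite (eSupp C)), hCcard]
  have hsumT : ∑ v ∈ FV, {e | e ∈ T ∧ v ∈ e}.ncard = 2 * T.ncard := handshake hd
  have hsumC : ∑ v ∈ FW, {e | e ∈ C ∧ v ∈ e}.ncard = 2 * C.ncard := handshake hdC
  -- outside vertices have degree ≥ 2
  have hout : ∀ v ∈ FV \ FW, 2 ≤ {e | e ∈ T ∧ v ∈ e}.ncard := by
    intro v hv
    rw [Finset.mem_sdiff] at hv
    have hvT : v ∈ eSupp T := (Set.Finite.mem_toFinset _).mp hv.1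
    have hvC : v ∉ eSupp C := fun h => hv.2 ((Set.Finite.mem_toFinset _).mpr h)
    have h1 := deg_ge_one hvT
    rcases Nat.lt_or_ge {e | e ∈ T ∧ v ∈ e}.ncard 2 with h | h
    · exfalso
      have hdeg1 : {e | e ∈ T ∧ v ∈ e}.ncard = 1 := by omega
      obtain ⟨f, hf⟩ := leaf_of_deg_one hdeg1
      exact hvC ⟨f, hcon v f hf, hf.2.1⟩
    · exact h
  have hmono : ∀ v : V, {e | e ∈ C ∧ v ∈ e}.ncard ≤ {e | e ∈ T ∧ v ∈ e}.ncard := by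
    intro v
    exact Set.ncard_le_ncard (fun e he => ⟨hsub he.1, he.2⟩) (Set.toFinite _)
  -- sum over C-support of the C-degrees
  have hsplit : ∑ v ∈ FV, {e | e ∈ T ∧ v ∈ e}.ncard
      = (∑ v ∈ FV \ FW, {e | e ∈ T ∧ v ∈ e}.ncard)
        + ∑ v ∈ FW, {e | e ∈ T ∧ v ∈ e}.ncard := (Finset.sum_sdiff hWV).symm
  have houtsum : 2 * (FV.card - FW.card) ≤ ∑ v ∈ FV \ FW, {e | e ∈ T ∧ v ∈ e}.ncard := by
    calc 2 * (FV.card - FW.card) = ∑ _v ∈ FV \ FW, 2 := by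
          rw [Finset.sum_const, smul_eq_mul, mul_comm, Finset.card_sdiff_of_subset hWV]
      _ ≤ _ := Finset.sum_le_sum hout
  have hWsum : ∑ v ∈ FW, {e | e ∈ C ∧ v ∈ e}.ncard ≤ ∑ v ∈ FW, {e | e ∈ T ∧ v ∈ e}.ncard :=
    Finset.sum_le_sum (fun v _ => hmono v)
  -- equality forced
  have hsumWC : ∑ v ∈ FW, {e | e ∈ C ∧ v ∈ e}.ncard = 2 * C.ncard := hsumC
  have heq : ∑ v ∈ FW, {e | e ∈ T ∧ v ∈ e}.ncard = ∑ v ∈ FW, {e | e ∈ C ∧ v ∈ e}.ncard := by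
    omega
  have hptwise : ∀ v ∈ FW, {e | e ∈ C ∧ v ∈ e}.ncard = {e | e ∈ T ∧ v ∈ e}.ncard :=
    (Finset.sum_eq_sum_iff_of_le (fun v _ => hmono v)).mp heq.symm
  -- hence for every v in supp C, every T-edge at v is in C
  have hedges : ∀ v ∈ eSupp C, ∀ e ∈ T, v ∈ e → e ∈ C := by
    intro v hv e he hve
    have hveq : {e | e ∈ C ∧ v ∈ e} = {e | e ∈ T ∧ v ∈ e} := by
      refine Set.eq_of_subset_of_ncard_le
        (fun e (he : e ∈ C ∧ v ∈ e) => (⟨hsub he.1, he.2⟩ : e ∈ T ∧ v ∈ e)) ?_ (Set.toFinite _)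
      rw [hptwise v ((Set.Finite.mem_toFinset _).mpr hv)]
    have : e ∈ {e | e ∈ C ∧ v ∈ e} := by rw [hveq]; exact ⟨he, hve⟩
    exact this.1
  -- crossing edge gives a contradiction
  have hzex : ∃ z, z ∈ eSupp T ∧ z ∉ eSupp C := by
    by_contra hno
    push_neg at hno
    have : eSupp T ⊆ eSupp C := hno
    have := Set.ncard_le_ncard this (Set.toFinite _)
    omega
  obtain ⟨z, hzT, hzC⟩ := hzex
  obtain ⟨e0, he0⟩ := hCne
  obtain ⟨a0, b0, he0eq⟩ := sym2_repr e0
  have hx0C : a0 ∈ eSupp C := ⟨e0, he0, by rw [he0eq]; exact Sym2.mem_mk_left _ _⟩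
  have hx0T : a0 ∈ eSupp T := eSupp_mono hsub hx0C
  obtain ⟨w⟩ := hTreach z hzT a0 hx0T
  obtain ⟨aa, bb, hab, haW, hbW⟩ := cross (W := eSupp C) w hzC hx0C
  have : s(aa, bb) ∈ C := hedges bb hbW _ hab (Sym2.mem_mk_right _ _)
  exact haW ⟨s(aa, bb), this, Sym2.mem_mk_left _ _⟩

lemma supp_diff_leaf [Fintype V] {G : SimpleGraph V} {T : Set (Sym2 V)} (hG : Good G T)
    (h2 : 2 ≤ T.ncard) {x : V} {f : Sym2 V} (hleaf : IsLeafE T x f) :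
    eSupp (T \ {f}) = eSupp T \ {x} := by
  classical
  obtain ⟨hf, hxf, huniq⟩ := hleaf
  obtain ⟨hTG, hne, hreach, hcard⟩ := hG
  apply Set.Subset.antisymm
  · rintro v ⟨e, ⟨he, hef⟩, hv⟩
    refine ⟨⟨e, he, hv⟩, ?_⟩
    intro hvx
    rw [Set.mem_singleton_iff] at hvx
    subst hvx
    exact hef (huniq e he hv)
  · rintro v ⟨hvT, hvx⟩
    rw [Set.mem_singleton_iff] at hvx
    have hzex : (eSupp T \ {x, v}).Nonempty := by
      by_contra hno
      rw [Set.not_nonempty_iff_eq_empty, Set.diff_eq_empty] at hno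
      have h1 := Set.ncard_le_ncard hno (Set.toFinite _)
      have h2' := Set.ncard_insert_le x ({v} : Set V)
      rw [hcard] at h1
      rw [Set.ncard_singleton] at h2'
      omega
    obtain ⟨z, hzT, hz2⟩ := hzex
    have hzx : z ≠ x := fun h => hz2 (by rw [h]; exact Or.inl rfl)
    have hzv : z ≠ v := fun h => hz2 (by rw [h]; exact Or.inr rfl)
    obtain ⟨w⟩ := hreach v hvT z hzT
    obtain ⟨w', hp⟩ := w.toPath
    have hxns : x ∉ w'.support := path_avoids_leaf huniq w' hp hvx hzx
    cases w' with
    | nil => exact absurd rfl hzv.symm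
    | @cons _ y _ hadj q =>
      have hey : s(v, y) ∈ T := edge_mem_of_adj hadj
      have hneyf : s(v, y) ≠ f := by
        intro h
        have hxin : x ∈ s(v, y) := h ▸ hxf
        rcases Sym2.mem_iff.mp hxin with rfl | rfl
        · exact hvx rfl
        · apply hxns
          rw [Walk.support_cons]
          exact List.mem_cons_of_mem _ (Walk.start_mem_support q)
      exact ⟨s(v, y), ⟨hey, hneyf⟩, Sym2.mem_mk_left _ _⟩

/-- Move 1: remove a leaf edge, attach a pendant edge elsewhere. -/
lemma move1 [Fintype V] {G : SimpleGraph V} {T : Set (Sym2 V)} (hG : Good G T)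
    (h2 : 2 ≤ T.ncard) {x : V} {f : Sym2 V} (hleaf : IsLeafE T x f)
    {a b : V} (hep : s(a, b) ∈ G.edgeSet) (ha : a ∈ eSupp T) (hax : a ≠ x) (hb : b ∉ eSupp T) :
    Good G (T \ {f} ∪ {s(a, b)}) ∧ eSupp (T \ {f} ∪ {s(a, b)}) = (eSupp T \ {x}) ∪ {b}
      ∧ s(a, b) ∉ T ∧ (T \ {f} ∪ {s(a, b)}).ncard = T.ncard := by
  classical
  obtain ⟨hf, hxf, huniq⟩ := hleaf
  obtain ⟨hTG, hne, hreach, hcard⟩ := hG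
  have hab : a ≠ b := ((G.mem_edgeSet).mp hep).ne
  have hnotT : s(a, b) ∉ T := fun h => hb ⟨s(a, b), h, Sym2.mem_mk_right _ _⟩
  have hxT : x ∈ eSupp T := ⟨f, hf, hxf⟩
  have hsd : eSupp (T \ {f}) = eSupp T \ {x} :=
    supp_diff_leaf ⟨hTG, hne, hreach, hcard⟩ h2 ⟨hf, hxf, huniq⟩
  have hsupp : eSupp (T \ {f} ∪ {s(a, b)}) = (eSupp T \ {x}) ∪ {b} := by
    rw [eSupp_union, hsd, eSupp_pair]
    ext v
    simp only [Set.mem_union, Set.mem_diff, Set.mem_singleton_iff, Set.mem_insert_iff]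
    constructor
    · rintro (h | rfl | rfl)
      · exact Or.inl h
      · exact Or.inl ⟨ha, hax⟩
      · exact Or.inr rfl
    · rintro (h | rfl)
      · exact Or.inl h
      · exact Or.inr (Or.inr rfl)
  have hbd : b ∉ eSupp T \ {x} := fun h => hb h.1
  have hsupp_card : (eSupp (T \ {f} ∪ {s(a, b)})).ncard = T.ncard + 1 := by
    rw [hsupp, Set.union_singleton, Set.ncard_insert_of_notMem hbd (Set.toFinite _),
      Set.ncard_diff_singleton_of_mem hxT, hcard]
    omega
  have hcardT : (T \ {f} ∪ {s(a, b)}).ncard = T.ncard := by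
    have hfnot : s(a, b) ∉ T \ {f} := fun h => hnotT h.1
    rw [Set.union_singleton, Set.ncard_insert_of_notMem hfnot (Set.toFinite _),
      Set.ncard_diff_singleton_of_mem hf]
    have hpos : 0 < T.ncard := (Set.ncard_pos (Set.toFinite T)).mpr hne
    omega
  -- reachability
  obtain ⟨y, hfy⟩ := Sym2.mem_iff_exists.mp hxf
  have hkey : ∀ u ∈ eSupp T \ {x}, (fromEdgeSet (T \ {f} ∪ {s(a, b)})).Reachable u a := by
    rintro u ⟨huT, hux⟩
    rw [Set.mem_singleton_iff] at hux
    obtain ⟨w⟩ := hreach u huT a ha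
    obtain ⟨w', hpw⟩ := w.toPath
    have hxns : x ∉ w'.support := path_avoids_leaf huniq w' hpw hux hax
    refine reachable_of_walk_edges w' ?_
    intro e he
    have heT : e ∈ T := walk_edges_mem w' e he
    have hnef : e ≠ f := by
      intro hh
      subst hh
      apply hxns
      rw [hfy] at he
      exact Walk.fst_mem_support_of_mem_edges w' he
    exact Or.inl ⟨heT, hnef⟩
  have hadj' : (fromEdgeSet (T \ {f} ∪ {s(a, b)})).Adj a b :=
    (fromEdgeSet_adj _).mpr ⟨Or.inr rfl, hab⟩
  have hreach' : ∀ u ∈ eSupp (T \ {f} ∪ {s(a, b)}), ∀ v ∈ eSupp (T \ {f} ∪ {s(a, b)}),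
      (fromEdgeSet (T \ {f} ∪ {s(a, b)})).Reachable u v := by
    have hto : ∀ u ∈ eSupp (T \ {f} ∪ {s(a, b)}),
        (fromEdgeSet (T \ {f} ∪ {s(a, b)})).Reachable u a := by
      intro u hu
      rw [hsupp] at hu
      rcases hu with hu | hu
      · exact hkey u hu
      · rw [Set.mem_singleton_iff] at hu
        subst hu
        exact hadj'.symm.reachable
    intro u hu v hv
    exact (hto u hu).trans (hto v hv).symm
  refine ⟨⟨?_, ⟨s(a, b), Or.inr rfl⟩, hreach', by rw [hsupp_card, hcardT]⟩, hsupp, hnotT, hcardT⟩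
  rintro e (⟨he, _⟩ | he)
  · exact hTG he
  · rw [Set.mem_singleton_iff] at he
    subst he
    exact hep

/-- Move 2: add an edge between two support vertices, remove an edge of the created cycle. -/
lemma move2 [Fintype V] {G : SimpleGraph V} {T : Set (Sym2 V)} (hG : Good G T)
    {a b : V} (hep : s(a, b) ∈ G.edgeSet) (hnT : s(a, b) ∉ T)
    {p : (fromEdgeSet T).Walk a b} (hpath : p.IsPath) {em : Sym2 V} (hem : em ∈ p.edges) :
    Good G (T \ {em} ∪ {s(a, b)}) ∧ eSupp (T \ {em} ∪ {s(a, b)}) = eSupp T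
      ∧ em ∈ T ∧ (T \ {em} ∪ {s(a, b)}).ncard = T.ncard := by
  obtain ⟨hTG, hne, hreach, hcard⟩ := hG
  have hemT : em ∈ T := walk_edges_mem p em hem
  obtain ⟨c, d, hcd⟩ := sym2_repr em
  have hab : a ≠ b := ((G.mem_edgeSet).mp hep).ne
  have hcdne : c ≠ d := by
    intro h
    apply good_nondiag hTG em hemT
    rw [hcd, h]
    exact Sym2.mk_isDiag_iff.mpr rfl
  have hsub' : ∀ e ∈ T, e ≠ em → e ∈ T \ {em} ∪ {s(a, b)} :=
    fun e he hne => Or.inl ⟨he, hne⟩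
  have hadj' : (fromEdgeSet (T \ {em} ∪ {s(a, b)})).Adj a b :=
    (fromEdgeSet_adj _).mpr ⟨Or.inr rfl, hab⟩
  have hRcd : (fromEdgeSet (T \ {em} ∪ {s(a, b)})).Reachable c d :=
    cyc hcd hsub' p hpath.isTrail.edges_nodup hem hadj'.reachable
  have haT : a ∈ eSupp T := mem_supp_of_reachable_ne ⟨p⟩ hab
  have hbT : b ∈ eSupp T := mem_supp_of_reachable_ne (Reachable.symm ⟨p⟩) hab.symm
  have hsupp : eSupp (T \ {em} ∪ {s(a, b)}) = eSupp T := by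
    apply Set.Subset.antisymm
    · rintro v ⟨e, (he | he), hv⟩
      · exact ⟨e, he.1, hv⟩
      · rw [Set.mem_singleton_iff] at he
        subst he
        rcases Sym2.mem_iff.mp hv with rfl | rfl
        · exact haT
        · exact hbT
    · rintro v ⟨e, he, hv⟩
      by_cases heg : e = em
      · subst heg
        rw [hcd] at hv
        rcases Sym2.mem_iff.mp hv with rfl | rfl
        · exact mem_supp_of_reachable_ne hRcd hcdne
        · exact mem_supp_of_reachable_ne hRcd.symm hcdne.symm
      · exact ⟨e, Or.inl ⟨he, heg⟩, hv⟩
  have hcardT : (T \ {em} ∪ {s(a, b)}).ncard = T.ncard := by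
    have hfnot : s(a, b) ∉ T \ {em} := fun h => hnT h.1
    rw [Set.union_singleton, Set.ncard_insert_of_notMem hfnot (Set.toFinite _),
      Set.ncard_diff_singleton_of_mem hemT]
    have hpos : 0 < T.ncard := (Set.ncard_pos (Set.toFinite T)).mpr hne
    omega
  have hreach' : ∀ u ∈ eSupp (T \ {em} ∪ {s(a, b)}), ∀ v ∈ eSupp (T \ {em} ∪ {s(a, b)}),
      (fromEdgeSet (T \ {em} ∪ {s(a, b)})).Reachable u v := by
    intro u hu v hv
    rw [hsupp] at hu hv
    exact reach_swap (S' := T \ {em} ∪ {s(a, b)}) hcd hsub' hRcd (hreach u hu v hv)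
  refine ⟨⟨?_, ⟨s(a, b), Or.inr rfl⟩, hreach', by rw [hsupp, hcard, hcardT]⟩, hsupp, hemT, hcardT⟩
  rintro e (⟨he, _⟩ | he)
  · exact hTG he
  · rw [Set.mem_singleton_iff] at he
    subst he
    exact hep

lemma good_singleton [Fintype V] {G : SimpleGraph V} {a b : V} (h : s(a, b) ∈ G.edgeSet) :
    Good G {s(a, b)} := by
  have hab : a ≠ b := ((G.mem_edgeSet).mp h).ne
  refine ⟨?_, ⟨s(a, b), rfl⟩, ?_, ?_⟩
  · rintro e he
    rw [Set.mem_singleton_iff] at he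
    subst he
    exact h
  · intro u hu v hv
    rw [eSupp_pair] at hu hv
    have hadj : (fromEdgeSet ({s(a, b)} : Set (Sym2 V))).Adj a b :=
      (fromEdgeSet_adj _).mpr ⟨rfl, hab⟩
    rcases hu with rfl | rfl <;> rcases hv with rfl | rfl
    · exact Reachable.refl _
    · exact hadj.reachable
    · exact hadj.symm.reachable
    · exact Reachable.refl _
  · rw [eSupp_pair, Set.ncard_pair hab, Set.ncard_singleton]

lemma good_insert_pendant [Fintype V] {G : SimpleGraph V} {C : Set (Sym2 V)} (hC : Good G C)
    {a b : V} (he : s(a, b) ∈ G.edgeSet) (ha : a ∈ eSupp C) (hb : b ∉ eSupp C) :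
    Good G (C ∪ {s(a, b)}) ∧ (C ∪ {s(a, b)}).ncard = C.ncard + 1 := by
  obtain ⟨hCG, hne, hreach, hcard⟩ := hC
  have hab : a ≠ b := ((G.mem_edgeSet).mp he).ne
  have hnotC : s(a, b) ∉ C := fun h => hb ⟨s(a, b), h, Sym2.mem_mk_right _ _⟩
  have hcardC : (C ∪ {s(a, b)}).ncard = C.ncard + 1 := by
    rw [Set.union_singleton, Set.ncard_insert_of_notMem hnotC (Set.toFinite _)]
  have hsupp : eSupp (C ∪ {s(a, b)}) = eSupp C ∪ {b} := by
    rw [eSupp_union, eSupp_pair]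
    ext v
    simp only [Set.mem_union, Set.mem_singleton_iff, Set.mem_insert_iff]
    constructor
    · rintro (h | rfl | rfl)
      · exact Or.inl h
      · exact Or.inl ha
      · exact Or.inr rfl
    · rintro (h | rfl)
      · exact Or.inl h
      · exact Or.inr (Or.inr rfl)
  have hadj' : (fromEdgeSet (C ∪ {s(a, b)})).Adj a b :=
    (fromEdgeSet_adj _).mpr ⟨Or.inr rfl, hab⟩
  have hreach' : ∀ u ∈ eSupp (C ∪ {s(a, b)}), ∀ v ∈ eSupp (C ∪ {s(a, b)}),
      (fromEdgeSet (C ∪ {s(a, b)})).Reachable u v := by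
    have hto : ∀ u ∈ eSupp (C ∪ {s(a, b)}), (fromEdgeSet (C ∪ {s(a, b)})).Reachable u a := by
      intro u hu
      rw [hsupp] at hu
      rcases hu with hu | hu
      · exact reachable_mono_set Set.subset_union_left (hreach u hu a ha)
      · rw [Set.mem_singleton_iff] at hu
        subst hu
        exact hadj'.symm.reachable
    intro u hu v hv
    exact (hto u hu).trans (hto v hv).symm
  refine ⟨⟨?_, ⟨s(a, b), Or.inr rfl⟩, hreach', ?_⟩, hcardC⟩
  · rintro e (hh | hh)
    · exact hCG hh
    · rw [Set.mem_singleton_iff] at hh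
      subst hh
      exact he
  · rw [hsupp, Set.union_singleton, Set.ncard_insert_of_notMem hb (Set.toFinite _),
      hcard, hcardC]

lemma touch_walk {T2 C : Set (Sym2 V)} :
    ∀ {v q : V} (_w : (fromEdgeSet T2).Walk v q), v ∈ eSupp C →
      q ∈ eSupp C ∨ ∃ a x : V, s(a, x) ∈ T2 ∧ s(a, x) ∉ C ∧ a ∈ eSupp C := by
  intro v q w
  induction w with
  | nil => exact fun h => Or.inl h
  | @cons a x _ hadj p ih =>
    intro hv
    by_cases hC : s(a, x) ∈ C
    · exact ih ⟨s(a, x), hC, Sym2.mem_mk_right _ _⟩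
    · exact Or.inr ⟨a, x, edge_mem_of_adj hadj, hC, hv⟩

lemma exists_touch [Fintype V] {G : SimpleGraph V} {T2 C : Set (Sym2 V)} (hT2 : Good G T2)
    (hsub : C ⊆ T2) (hCne : (eSupp C).Nonempty) (hlt : C.ncard < T2.ncard) :
    ∃ a x : V, s(a, x) ∈ T2 ∧ s(a, x) ∉ C ∧ a ∈ eSupp C := by
  obtain ⟨hT2G, hT2ne, hreach, hcard⟩ := hT2
  have hgex : ∃ g ∈ T2, g ∉ C := by
    by_contra hno
    push_neg at hno
    have : T2 ⊆ C := hno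
    have := Set.ncard_le_ncard this (Set.toFinite _)
    omega
  obtain ⟨g, hgT2, hgC⟩ := hgex
  obtain ⟨c, d, rfl⟩ := sym2_repr g
  obtain ⟨v0, hv0⟩ := hCne
  have hv0T2 : v0 ∈ eSupp T2 := eSupp_mono hsub hv0
  have hcT2 : c ∈ eSupp T2 := ⟨s(c, d), hgT2, Sym2.mem_mk_left _ _⟩
  obtain ⟨w⟩ := hreach v0 hv0T2 c hcT2
  rcases touch_walk (C := C) w hv0 with h | h
  · exact ⟨c, d, hgT2, hgC, h⟩
  · exact h

/-! ### Reconfiguration sequence combinators -/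

lemma tjreach_refl {G : SimpleGraph V} {P : Set (Sym2 V) → Prop} {E : Set (Sym2 V)} (h : P E) :
    TJReachE G P E E :=
  ⟨0, fun _ => E, rfl, rfl, fun _ _ => h, fun k hk => absurd hk (Nat.not_lt_zero k)⟩

lemma tjreach_single {G : SimpleGraph V} {P : Set (Sym2 V) → Prop} {E1 E2 : Set (Sym2 V)}
    (h1 : P E1) (h2 : P E2) (hstep : TJStepE G E1 E2) : TJReachE G P E1 E2 := by
  refine ⟨1, fun n => if n = 0 then E1 else E2, by simp, by simp, ?_, ?_⟩
  · intro k _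
    by_cases h : k = 0 <;> simp [h, h1, h2]
  · intro k hk
    have hk0 : k = 0 := by omega
    subst hk0
    simpa using hstep

lemma tjreach_trans {G : SimpleGraph V} {P : Set (Sym2 V) → Prop} {E1 E2 E3 : Set (Sym2 V)}
    (h12 : TJReachE G P E1 E2) (h23 : TJReachE G P E2 E3) : TJReachE G P E1 E3 := by
  obtain ⟨l1, f, hf0, hfl, hfP, hfS⟩ := h12
  obtain ⟨l2, g, hg0, hgl, hgP, hgS⟩ := h23
  refine ⟨l1 + l2, fun n => if n < l1 then f n else g (n - l1), ?_, ?_, ?_, ?_⟩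
  · dsimp only
    split_ifs with h
    · exact hf0
    · have hl1 : l1 = 0 := by omega
      calc g (0 - l1) = g 0 := by rw [hl1]
        _ = E2 := hg0
        _ = f 0 := by rw [hl1] at hfl; exact hfl.symm
        _ = E1 := hf0
  · dsimp only
    rw [if_neg (by omega)]
    have h : l1 + l2 - l1 = l2 := by omega
    rw [h]
    exact hgl
  · intro k hk
    dsimp only
    split_ifs with h
    · exact hfP k (by omega)
    · exact hgP (k - l1) (by omega)
  · intro k hk
    dsimp only
    by_cases h1 : k + 1 < l1
    · rw [if_pos (by omega), if_pos h1]
      exact hfS k (by omega)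
    · by_cases h2 : k < l1
      · rw [if_pos h2, if_neg h1]
        have heq : k + 1 = l1 := by omega
        have e1 : k + 1 - l1 = 0 := by omega
        rw [e1, hg0, ← hfl, ← heq]
        exact hfS k (by omega)
      · rw [if_neg h2, if_neg h1]
        have e1 : k + 1 - l1 = (k - l1) + 1 := by omega
        rw [e1]
        exact hgS (k - l1) (by omega)

lemma supp_nonempty {T : Set (Sym2 V)} (h : T.Nonempty) : (eSupp T).Nonempty := by
  obtain ⟨e, he⟩ := h
  obtain ⟨a, b, rfl⟩ := sym2_repr e
  exact ⟨a, s(a, b), he, Sym2.mem_mk_left _ _⟩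

/-! ### Docking: moving a tree along a walk of the host graph -/

lemma dock [Fintype V] {G : SimpleGraph V} :
    ∀ {u v : V} (_w : G.Walk u v) (T : Set (Sym2 V)), Good G T → 2 ≤ T.ncard → u ∈ eSupp T →
      ∃ T', TJReachE G (Good G) T T' ∧ Good G T' ∧ T'.ncard = T.ncard ∧ v ∈ eSupp T' := by
  intro u v w
  induction w with
  | nil => exact fun T hG _ hu => ⟨T, tjreach_refl hG, hG, rfl, hu⟩
  | @cons a x _ hadj p ih =>
    intro T hG h2 ha
    by_cases hx : x ∈ eSupp T
    · exact ih T hG h2 hx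
    · obtain ⟨xl, f, hleaf, hxla⟩ := two_leaves hG h2 a
      have hep : s(a, x) ∈ G.edgeSet := (G.mem_edgeSet).mpr hadj
      obtain ⟨hG1, hsupp1, hnotT, hcard1⟩ := move1 hG h2 hleaf hep ha hxla.symm hx
      have hstep : TJStepE G T (T \ {f} ∪ {s(a, x)}) := ⟨f, s(a, x), hleaf.1, hep, hnotT, rfl⟩
      have hxT1 : x ∈ eSupp (T \ {f} ∪ {s(a, x)}) := by
        rw [hsupp1]; exact Or.inr rfl
      obtain ⟨T', hr', hG', hcard', hv⟩ := ih (T \ {f} ∪ {s(a, x)}) hG1 (by omega) hxT1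
      exact ⟨T', tjreach_trans (tjreach_single hG hG1 hstep) hr', hG', by omega, hv⟩

/-! ### Initialization: create a common edge with the target tree -/

lemma init [Fintype V] {G : SimpleGraph V} {T T2 : Set (Sym2 V)} (hT : Good G T)
    (hT2 : Good G T2) (h2 : 2 ≤ T.ncard) {v0 : V} (hv0T : v0 ∈ eSupp T)
    (hv0T2 : v0 ∈ eSupp T2) :
    ∃ T' C, TJReachE G (Good G) T T' ∧ Good G T' ∧ T'.ncard = T.ncard ∧
      Good G C ∧ C ⊆ T' ∧ C ⊆ T2 := by
  classical
  obtain ⟨e, heT2, hv0e⟩ := hv0T2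
  obtain ⟨b, rfl⟩ := Sym2.mem_iff_exists.mp hv0e
  have heG : s(v0, b) ∈ G.edgeSet := hT2.1 heT2
  have hvb : v0 ≠ b := ((G.mem_edgeSet).mp heG).ne
  by_cases heT : s(v0, b) ∈ T
  · exact ⟨T, {s(v0, b)}, tjreach_refl hT, hT, rfl, good_singleton heG,
      Set.singleton_subset_iff.mpr heT, Set.singleton_subset_iff.mpr heT2⟩
  · by_cases hbT : b ∈ eSupp T
    · obtain ⟨w⟩ := hT.2.2.1 v0 hv0T b hbT
      obtain ⟨p, hp⟩ := w.toPath
      have hedge : ∃ em, em ∈ p.edges := by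
        cases p with
        | nil => exact absurd rfl hvb
        | cons h q => exact ⟨_, List.mem_cons_self⟩
      obtain ⟨em, hemp⟩ := hedge
      obtain ⟨hG', hsupp', hemT, hcard'⟩ := move2 hT heG heT hp hemp
      refine ⟨T \ {em} ∪ {s(v0, b)}, {s(v0, b)},
        tjreach_single hT hG' ⟨em, s(v0, b), hemT, heG, heT, rfl⟩, hG', hcard',
        good_singleton heG, Set.singleton_subset_iff.mpr (Or.inr rfl),
        Set.singleton_subset_iff.mpr heT2⟩
    · obtain ⟨xl, f, hleaf, hxlv⟩ := two_leaves hT h2 v0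
      obtain ⟨hG', hsupp', hnotT, hcard'⟩ := move1 hT h2 hleaf heG hv0T hxlv.symm hbT
      refine ⟨T \ {f} ∪ {s(v0, b)}, {s(v0, b)},
        tjreach_single hT hG' ⟨f, s(v0, b), hleaf.1, heG, heT, rfl⟩, hG', hcard',
        good_singleton heG, Set.singleton_subset_iff.mpr (Or.inr rfl),
        Set.singleton_subset_iff.mpr heT2⟩

/-! ### The growth loop -/

lemma grow [Fintype V] {G : SimpleGraph V} :
    ∀ (m : ℕ) (T T2 C : Set (Sym2 V)), Good G T → Good G T2 → T.ncard = T2.ncard →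
      2 ≤ T.ncard → Good G C → C ⊆ T → C ⊆ T2 → T2.ncard ≤ C.ncard + m →
      TJReachE G (Good G) T T2 := by
  intro m
  induction m with
  | zero =>
    intro T T2 C hT hT2 hcards h2 hC hCT hCT2 hm
    have hceq2 : C = T2 := Set.eq_of_subset_of_ncard_le hCT2 (by omega) (Set.toFinite _)
    have hceq1 : C = T := Set.eq_of_subset_of_ncard_le hCT (by omega) (Set.toFinite _)
    have hTT2 : T = T2 := hceq1.symm.trans hceq2
    subst hTT2
    exact tjreach_refl hT
  | succ m ihm =>
    intro T T2 C hT hT2 hcards h2 hC hCT hCT2 hm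
    by_cases hfin : T2.ncard ≤ C.ncard
    · have hceq2 : C = T2 := Set.eq_of_subset_of_ncard_le hCT2 hfin (Set.toFinite _)
      have hceq1 : C = T := Set.eq_of_subset_of_ncard_le hCT (by omega) (Set.toFinite _)
      have hTT2 : T = T2 := hceq1.symm.trans hceq2
      subst hTT2
      exact tjreach_refl hT
    · have hlt : C.ncard < T2.ncard := by omega
      obtain ⟨a, x, hax2, haxC, haC⟩ := exists_touch hT2 hCT2 (supp_nonempty hC.2.1) hlt
      have haxG : s(a, x) ∈ G.edgeSet := hT2.1 hax2
      have hxsuppC : x ∉ eSupp C := by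
        intro hxC
        apply nocycle hT2 hax2 rfl
        refine reachable_mono_set (S := C) (S' := T2 \ {s(a, x)}) ?_ (hC.2.2.1 a haC x hxC)
        intro e he
        exact ⟨hCT2 he, fun heq => haxC (by rw [Set.mem_singleton_iff] at heq; rw [← heq]; exact he)⟩
      obtain ⟨hC', hcC'⟩ := good_insert_pendant hC haxG haC hxsuppC
      by_cases haxT : s(a, x) ∈ T
      · refine ihm T T2 (C ∪ {s(a, x)}) hT hT2 hcards h2 hC' ?_ ?_ (by omega)
        · rintro e (he | he)
          · exact hCT he
          · rw [Set.mem_singleton_iff] at he; subst he; exact haxT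
        · rintro e (he | he)
          · exact hCT2 he
          · rw [Set.mem_singleton_iff] at he; subst he; exact hax2
      · by_cases hxT : x ∈ eSupp T
        · -- cycle move
          classical
          have haT : a ∈ eSupp T := eSupp_mono hCT haC
          obtain ⟨w⟩ := hT.2.2.1 a haT x hxT
          obtain ⟨p, hp⟩ := w.toPath
          have hem : ∃ em ∈ p.edges, em ∉ C := by
            by_contra hno
            push_neg at hno
            apply nocycle hT2 hax2 rfl
            refine reachable_of_walk_edges p ?_
            intro e he
            exact ⟨hCT2 (hno e he), fun heq => haxC (by rw [Set.mem_singleton_iff] at heq; rw [← heq]; exact hno e he)⟩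
          obtain ⟨em, hemp, hemC⟩ := hem
          obtain ⟨hG', hsupp', hemT, hcard'⟩ := move2 hT haxG haxT hp hemp
          refine tjreach_trans
            (tjreach_single hT hG' ⟨em, s(a, x), hemT, haxG, haxT, rfl⟩)
            (ihm (T \ {em} ∪ {s(a, x)}) T2 (C ∪ {s(a, x)}) hG' hT2
              (by rw [hcard']; exact hcards) (by omega) hC' ?_ ?_ (by omega))
          · rintro e (he | he)
            · exact Or.inl ⟨hCT he, fun h => hemC (by rw [Set.mem_singleton_iff] at h; rw [← h]; exact he)⟩
            · exact Or.inr he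
          · rintro e (he | he)
            · exact hCT2 he
            · rw [Set.mem_singleton_iff] at he; subst he; exact hax2
        · -- pendant move
          have haT : a ∈ eSupp T := eSupp_mono hCT haC
          obtain ⟨xl, f, hleaf, hfC⟩ := crown hT hC hCT (by omega)
          have haxl : a ≠ xl := by
            intro h
            obtain ⟨e, heC, hae⟩ := haC
            rw [h] at hae
            exact hfC (hleaf.2.2 e (hCT heC) hae ▸ heC)
          obtain ⟨hG', hsupp', hnotT, hcard'⟩ := move1 hT h2 hleaf haxG haT haxl hxT
          refine tjreach_trans
            (tjreach_single hT hG' ⟨f, s(a, x), hleaf.1, haxG, haxT, rfl⟩)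
            (ihm (T \ {f} ∪ {s(a, x)}) T2 (C ∪ {s(a, x)}) hG' hT2
              (by rw [hcard']; exact hcards) (by omega) hC' ?_ ?_ (by omega))
          · rintro e (he | he)
            · exact Or.inl ⟨hCT he, fun h => hfC (by rw [Set.mem_singleton_iff] at h; rw [← h]; exact he)⟩
            · exact Or.inr he
          · rintro e (he | he)
            · exact hCT2 he
            · rw [Set.mem_singleton_iff] at he; subst he; exact hax2

/-- The backward direction in the `Good` world. -/
lemma backward [Fintype V] {G : SimpleGraph V} {Es Et : Set (Sym2 V)}
    (hcard : Es.ncard = Et.ncard) (h2 : 2 ≤ Es.ncard) (hs : Good G Es) (ht : Good G Et)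
    (hreach : ∀ u ∈ eSupp (Es ∪ Et), ∀ v ∈ eSupp (Es ∪ Et), G.Reachable u v) :
    TJReachE G (Good G) Es Et := by
  obtain ⟨u0, hu0⟩ := supp_nonempty hs.2.1
  obtain ⟨v0, hv0⟩ := supp_nonempty ht.2.1
  have hru := hreach u0 (by rw [eSupp_union]; exact Or.inl hu0) v0
    (by rw [eSupp_union]; exact Or.inr hv0)
  obtain ⟨w⟩ := hru
  obtain ⟨T1, hreach1, hG1, hcard1, hv0T1⟩ := dock w Es hs h2 hu0
  obtain ⟨T', C, hreach2, hG', hcard', hC, hCT', hCT2⟩ := init hG1 ht (by omega) hv0T1 hv0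
  have hgrow := grow Et.ncard T' Et C hG' ht (by omega) (by omega) hC hCT' hCT2 (by omega)
  exact tjreach_trans hreach1 (tjreach_trans hreach2 hgrow)

/-! ### Relating `FormsTree` and `Good` -/

/-- The projection homomorphism from the formed subgraph to the ambient `fromEdgeSet`. -/
def formedHom (T : Set (Sym2 V)) : formed T →g SimpleGraph.fromEdgeSet T where
  toFun := Subtype.val
  map_rel' := fun h => h

lemma formedHom_injective (T : Set (Sym2 V)) : Function.Injective (formedHom T) :=
  Subtype.val_injective

lemma reachable_formed_of_reachable {T : Set (Sym2 V)} :
    ∀ {u v : V} (w : (fromEdgeSet T).Walk u v) (hu : u ∈ eSupp T) (hv : v ∈ eSupp T),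
      (formed T).Reachable ⟨u, hu⟩ ⟨v, hv⟩ := by
  intro u v w
  induction w with
  | nil => intro hu hv; exact Reachable.refl _
  | @cons a x _ hadj p ih =>
    intro hu hv
    have hx : x ∈ eSupp T := ⟨s(a, x), edge_mem_of_adj hadj, Sym2.mem_mk_right _ _⟩
    have hadj' : (formed T).Adj ⟨a, hu⟩ ⟨x, hx⟩ := hadj
    exact hadj'.reachable.trans (ih hx hv)

lemma card_edges_formed [Fintype V] {G : SimpleGraph V} {T : Set (Sym2 V)}
    (hTG : T ⊆ G.edgeSet) : Nat.card (formed T).edgeSet = T.ncard := by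
  classical
  have hmap : ∀ e ∈ (formed T).edgeSet, Sym2.map (Subtype.val : eSupp T → V) e ∈ T := by
    intro e
    induction e using Sym2.ind with
    | _ a b =>
      intro he
      rw [Sym2.map_pair_eq]
      exact edge_mem_of_adj ((formed T).mem_edgeSet.mp he)
  set F : (formed T).edgeSet → T := fun e => ⟨Sym2.map Subtype.val e.1, hmap e.1 e.2⟩ with hF
  have hinj : Function.Injective F := by
    intro e1 e2 h
    apply Subtype.ext
    exact Sym2.map.injective Subtype.val_injective (congrArg Subtype.val h)
  have hsurj : Function.Surjective F := by
    rintro ⟨e, he⟩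
    obtain ⟨a, b, rfl⟩ := sym2_repr e
    have ha : a ∈ eSupp T := ⟨s(a, b), he, Sym2.mem_mk_left _ _⟩
    have hb : b ∈ eSupp T := ⟨s(a, b), he, Sym2.mem_mk_right _ _⟩
    have hab : a ≠ b := by
      intro h
      exact G.not_isDiag_of_mem_edgeSet (hTG he) (by rw [h]; exact Sym2.mk_isDiag_iff.mpr rfl)
    have hadj : (formed T).Adj ⟨a, ha⟩ ⟨b, hb⟩ := by
      have : (fromEdgeSet T).Adj a b := (fromEdgeSet_adj _).mpr ⟨he, hab⟩
      exact this
    refine ⟨⟨s(⟨a, ha⟩, ⟨b, hb⟩), (formed T).mem_edgeSet.mpr hadj⟩, ?_⟩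
    apply Subtype.ext
    rw [hF]
    exact Sym2.map_pair_eq _ _ _
  have := Nat.card_eq_of_bijective F ⟨hinj, hsurj⟩
  rw [this, Nat.card_coe_set_eq]

lemma acyclic_ambient [Fintype V] {G : SimpleGraph V} {T : Set (Sym2 V)} (hG : Good G T) :
    (fromEdgeSet T).IsAcyclic := by
  rw [isAcyclic_iff_forall_adj_isBridge]
  intro v w hadj
  have hvw : s(v, w) ∈ T := edge_mem_of_adj hadj
  refine isBridge_iff.mpr ?_
  intro hre
  unfold SimpleGraph.deleteEdges at hre
  have hEq : fromEdgeSet T \ fromEdgeSet {s(v, w)} = fromEdgeSet (T \ {s(v, w)}) := by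
    ext a b
    simp only [sdiff_adj, fromEdgeSet_adj, Set.mem_diff, Set.mem_singleton_iff]
    constructor
    · rintro ⟨⟨h1, h2⟩, h3⟩
      exact ⟨⟨h1, fun h => h3 ⟨h, h2⟩⟩, h2⟩
    · rintro ⟨⟨h1, h2⟩, h3⟩
      exact ⟨⟨h1, h3⟩, fun h => h2 h.1⟩
  rw [hEq] at hre
  exact nocycle hG hvw rfl hre

lemma formsTree_iff_good [Fintype V] {G : SimpleGraph V} {T : Set (Sym2 V)} :
    FormsTree G T ↔ Good G T := by
  constructor
  · rintro ⟨hTG, htree⟩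
    have hconn := htree.isConnected
    refine ⟨hTG, ?_, ?_, ?_⟩
    · obtain ⟨⟨v, e, he, _⟩⟩ := hconn.nonempty
      exact ⟨e, he⟩
    · intro u hu v hv
      have h := hconn.preconnected ⟨u, hu⟩ ⟨v, hv⟩
      exact h.map (formedHom T)
    · haveI : Fintype (eSupp T) := Fintype.ofFinite _
      haveI : Fintype (formed T).edgeSet := Fintype.ofFinite _
      have hh := htree.card_edgeFinset
      rw [edgeFinset_card] at hh
      have h1 : Fintype.card (formed T).edgeSet = T.ncard := by
        rw [← Nat.card_eq_fintype_card]
        exact card_edges_formed hTG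
      have h2 : Fintype.card (eSupp T) = (eSupp T).ncard := by
        rw [← Nat.card_eq_fintype_card]
        exact Nat.card_coe_set_eq _
      omega
  · rintro ⟨hTG, hne, hreach, hcard⟩
    have hconn : (formed T).Connected := by
      rw [connected_iff]
      constructor
      · rintro ⟨u, hu⟩ ⟨v, hv⟩
        obtain ⟨w⟩ := hreach u hu v hv
        exact reachable_formed_of_reachable w hu hv
      · obtain ⟨v0, hv0⟩ := supp_nonempty hne
        exact ⟨⟨v0, hv0⟩⟩
    have hacyc : (formed T).IsAcyclic := by
      intro v c hc
      exact acyclic_ambient ⟨hTG, hne, hreach, hcard⟩ (c.map (formedHom T))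
        (hc.map (formedHom_injective T))
    exact ⟨hTG, ⟨hconn, hacyc⟩⟩

/-! ### The forward direction -/

lemma good_reachable_in_G [Fintype V] {G : SimpleGraph V} {T : Set (Sym2 V)} (hG : Good G T)
    {u v : V} (hu : u ∈ eSupp T) (hv : v ∈ eSupp T) : G.Reachable u v := by
  have h := hG.2.2.1 u hu v hv
  have hle : fromEdgeSet T ≤ G := by
    have h1 := fromEdgeSet_mono hG.1
    rwa [fromEdgeSet_edgeSet] at h1
  exact h.mono hle

lemma step_ncard [Fintype V] {G : SimpleGraph V} {E1 E2 : Set (Sym2 V)} (h : TJStepE G E1 E2) :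
    E2.ncard = E1.ncard := by
  obtain ⟨em, ep, hem, _, hep, rfl⟩ := h
  rw [Set.union_singleton, Set.ncard_insert_of_notMem (fun hh => hep hh.1) (Set.toFinite _),
    Set.ncard_diff_singleton_of_mem hem]
  have hpos : 0 < E1.ncard := (Set.ncard_pos (Set.toFinite _)).mpr ⟨em, hem⟩
  omega

lemma step_shared [Fintype V] {G : SimpleGraph V} {E1 E2 : Set (Sym2 V)} (h : TJStepE G E1 E2)
    (h2 : 2 ≤ E1.ncard) : ∃ e, e ∈ E1 ∧ e ∈ E2 := by
  obtain ⟨em, ep, hem, _, hep, rfl⟩ := h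
  have hne : (E1 \ {em}).Nonempty := by
    apply Set.nonempty_of_ncard_ne_zero
    rw [Set.ncard_diff_singleton_of_mem hem]
    omega
  obtain ⟨e, he⟩ := hne
  exact ⟨e, he.1, Or.inl he⟩

lemma forward [Fintype V] {G : SimpleGraph V} {Es Et : Set (Sym2 V)}
    (h2 : 2 ≤ Es.ncard) (hr : TJReachE G (Good G) Es Et) :
    ∀ u ∈ eSupp (Es ∪ Et), ∀ v ∈ eSupp (Es ∪ Et), G.Reachable u v := by
  obtain ⟨l, f, hf0, hfl, hfP, hfS⟩ := hr
  have hgood0 : Good G Es := hf0 ▸ hfP 0 (by omega)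
  have hcards : ∀ k ≤ l, (f k).ncard = Es.ncard := by
    intro k
    induction k with
    | zero => intro _; rw [hf0]
    | succ k ih =>
      intro hk
      rw [step_ncard (hfS k (by omega))]
      exact ih (by omega)
  have hmain : ∀ k ≤ l, ∀ u ∈ eSupp Es, ∀ v ∈ eSupp (f k), G.Reachable u v := by
    intro k
    induction k with
    | zero =>
      intro _ u hu v hv
      rw [hf0] at hv
      exact good_reachable_in_G hgood0 hu hv
    | succ k ih =>
      intro hk u hu v hv
      obtain ⟨e, he1, he2⟩ := step_shared (hfS k (by omega))
        (by rw [hcards k (by omega)]; exact h2)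
      obtain ⟨a, b, rfl⟩ := sym2_repr e
      have haK : a ∈ eSupp (f k) := ⟨s(a, b), he1, Sym2.mem_mk_left _ _⟩
      have haK1 : a ∈ eSupp (f (k + 1)) := ⟨s(a, b), he2, Sym2.mem_mk_left _ _⟩
      exact (ih (by omega) u hu a haK).trans
        (good_reachable_in_G (hfP (k + 1) hk) haK1 hv)
  have hEs : ∀ p ∈ eSupp Es, ∀ q ∈ eSupp Es, G.Reachable p q := fun p hp q hq =>
    good_reachable_in_G hgood0 hp hq
  have hEt : ∀ q ∈ eSupp Et, ∀ p ∈ eSupp Es, G.Reachable p q := fun q hq p hp =>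
    hmain l le_rfl p hp q (by rw [hfl]; exact hq)
  obtain ⟨p0, hp0⟩ := supp_nonempty (Set.nonempty_of_ncard_ne_zero (by omega) : Es.Nonempty)
  intro u hu v hv
  rw [eSupp_union] at hu hv
  rcases hu with hu | hu <;> rcases hv with hv | hv
  · exact hEs u hu v hv
  · exact hEt v hv u hu
  · exact (hEt u hu p0 hp0).symm.trans (hEs p0 hp0 v hv)
  · exact (hEt u hu p0 hp0).symm.trans (hEt v hv p0 hp0)

theorem stmt8 [Fintype V] (G : SimpleGraph V) (Es Et : Set (Sym2 V))
    (hcard : Es.ncard = Et.ncard) (h2 : 2 ≤ Es.ncard)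
    (hs : FormsTree G Es) (ht : FormsTree G Et) :
    TJReachE G (FormsTree G) Es Et ↔
      ∀ u ∈ eSupp (Es ∪ Et), ∀ v ∈ eSupp (Es ∪ Et), G.Reachable u v := by
  have hgs : Good G Es := formsTree_iff_good.mp hs
  have hgt : Good G Et := formsTree_iff_good.mp ht
  constructor
  · intro h
    apply forward h2
    obtain ⟨l, f, h0, hl, hP, hS⟩ := h
    exact ⟨l, f, h0, hl, fun k hk => formsTree_iff_good.mp (hP k hk), hS⟩
  · intro h
    obtain ⟨l, f, h0, hl, hP, hS⟩ := backward hcard h2 hgs hgt h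
    exact ⟨l, f, h0, hl, fun k hk => formsTree_iff_good.mpr (hP k hk), hS⟩

end Stmt8
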